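/- Under the hypotheses of the previous statement (b > √(2ω_max/d_min)), the univariate function ψ_n(x) := Σ_{l=1}^L ω⁽ˡ⁾_n · MC_{b²/ω⁽ˡ⁾_n}(x − a⁽ˡ⁾) has 𝔄 = {a⁽¹⁾,…,a⁽ᴸ⁾} as the set of all its isolated local minimizers; in particular, the open neighborhoods N_l := {x : |x − a⁽ˡ⁾| < ω⁽ˡ⁾_n/b²} are pairwise disjoint, ψ_n is constant on the complement of their union, and on each N_l the function x ↦ MC_{b²/ω⁽ˡ⁾_n}(x − a⁽ˡ⁾) has a⁽ˡ⁾ as its unique local minimizer. -/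

import Mathlib

open Filter Topology

/-- The minimax concave penalty with parameter `γ`. -/
noncomputable def MC (γ : ℝ) (t : ℝ) : ℝ :=
  if |t| ≤ 1 / γ then |t| - γ / 2 * t ^ 2 else 1 / (2 * γ)

/-- `a` is an isolated local minimizer of the real-valued function `f`. -/
def IsIsolatedLocalMin {α : Type*} [TopologicalSpace α] (f : α → ℝ) (a : α) : Prop :=
  IsLocalMin f a ∧ ∃ U ∈ nhds a, ∀ y ∈ U, IsLocalMin f y → y = a

lemma MC_abs (γ t : ℝ) : MC γ t = MC γ |t| := by
  simp [MC, abs_abs, sq_abs]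

lemma MC_zero {γ : ℝ} (hγ : 0 < γ) : MC γ 0 = 0 := by
  rw [MC, if_pos (by simp; positivity)]
  simp

lemma MC_nonneg {γ : ℝ} (hγ : 0 < γ) (t : ℝ) : 0 ≤ MC γ t := by
  unfold MC
  split_ifs with h
  · have h1 : γ * |t| ≤ 1 := (le_div_iff₀' hγ).mp h
    nlinarith [sq_abs t, abs_nonneg t]
  · positivity

lemma MC_le_max {γ : ℝ} (hγ : 0 < γ) (t : ℝ) : MC γ t ≤ 1 / (2 * γ) := by
  unfold MC
  split_ifs with h
  · rw [le_div_iff₀ (by positivity)]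
    have h2 : γ ^ 2 * |t| ^ 2 = γ ^ 2 * t ^ 2 := by rw [sq_abs]
    nlinarith [sq_nonneg (γ * |t| - 1), h2]
  · exact le_refl _

lemma MC_of_one_div_le {γ : ℝ} (hγ : 0 < γ) {t : ℝ} (h : 1 / γ ≤ |t|) :
    MC γ t = 1 / (2 * γ) := by
  unfold MC
  split_ifs with h'
  · have he : |t| = 1 / γ := le_antisymm h' h
    have ht2 : t ^ 2 = (1/γ)^2 := by rw [← sq_abs, he]
    rw [he, ht2]; field_simp; ring
  · rfl

lemma MC_lt {γ : ℝ} (hγ : 0 < γ) {s t : ℝ} (hs : 0 ≤ s) (hst : s < t) (ht : t ≤ 1/γ) :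
    MC γ s < MC γ t := by
  have hs' : |s| = s := abs_of_nonneg hs
  have ht' : |t| = t := abs_of_nonneg (hs.trans hst.le)
  have h1 : γ * t ≤ 1 := (le_div_iff₀' hγ).mp ht
  unfold MC
  rw [hs', ht', if_pos (by linarith), if_pos ht]
  nlinarith [mul_pos (sub_pos.mpr hst) (show (0:ℝ) < 2 - γ*(t+s) by nlinarith)]

/-- For `b > √(2 ω_max/d_min)` the univariate function
`ψ(x) = Σ_l ω⁽ˡ⁾ MC_{b²/ω⁽ˡ⁾}(x − a⁽ˡ⁾)` has the alphabet as its set of isolated local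
minimizers; the neighborhoods `N_l = {x : |x − a⁽ˡ⁾| < ω⁽ˡ⁾/b²}` are pairwise disjoint,
`ψ` is constant outside their union, and on each `N_l` the corresponding MCP term has
`a⁽ˡ⁾` as its unique local minimizer. -/

theorem univariate_isolated_minimizers {L : ℕ} (a : Fin L → ℝ) (ha : Function.Injective a)
    (dmin : ℝ) (hdmin : IsLeast {d : ℝ | ∃ l l' : Fin L, l ≠ l' ∧ d = |a l - a l'|} dmin)
    (hdpos : 0 < dmin)
    (ω : Fin L → ℝ) (hω : ∀ l, 0 < ω l) (hsum : ∑ l, ω l = 1)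
    (ωmax : ℝ) (hωmax : IsGreatest (Set.range ω) ωmax)
    (b : ℝ) (hb : Real.sqrt (2 * ωmax / dmin) < b) :
    (∀ l l' : Fin L, l ≠ l' →
      Disjoint {x : ℝ | |x - a l| < ω l / b ^ 2} {x : ℝ | |x - a l'| < ω l' / b ^ 2}) ∧
    (∀ x y : ℝ, x ∉ (⋃ l, {x : ℝ | |x - a l| < ω l / b ^ 2}) →
      y ∉ (⋃ l, {x : ℝ | |x - a l| < ω l / b ^ 2}) →
      (∑ l, ω l * MC (b ^ 2 / ω l) (x - a l)) = ∑ l, ω l * MC (b ^ 2 / ω l) (y - a l)) ∧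
    (∀ l : Fin L,
      IsLocalMin (fun x : ℝ => MC (b ^ 2 / ω l) (x - a l)) (a l) ∧
      ∀ x ∈ {x : ℝ | |x - a l| < ω l / b ^ 2},
        IsLocalMin (fun x : ℝ => MC (b ^ 2 / ω l) (x - a l)) x → x = a l) ∧
    {x : ℝ | IsIsolatedLocalMin (fun x : ℝ => ∑ l, ω l * MC (b ^ 2 / ω l) (x - a l)) x} =
      Set.range a := by
  classical
  obtain ⟨l0, hl0⟩ := hωmax.1
  have hωmaxpos : 0 < ωmax := hl0 ▸ hω l0
  have hbpos : 0 < b := (Real.sqrt_nonneg _).trans_lt hb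
  have hb2 : 2 * ωmax / dmin < b ^ 2 := (Real.sqrt_lt' hbpos).mp hb
  have hb2' : 2 * ωmax < dmin * b ^ 2 := by
    rw [div_lt_iff₀ hdpos] at hb2; linarith
  have hrω : ∀ l, ω l / b ^ 2 < dmin / 2 := by
    intro l
    have h1 : ω l ≤ ωmax := hωmax.2 ⟨l, rfl⟩
    rw [div_lt_div_iff₀ (by positivity) (by norm_num)]
    nlinarith
  have hrpos : ∀ l, 0 < ω l / b ^ 2 := fun l => div_pos (hω l) (by positivity)
  have hγpos : ∀ l, 0 < b ^ 2 / ω l := fun l => div_pos (by positivity) (hω l)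
  have hinv : ∀ l, 1 / (b ^ 2 / ω l) = ω l / b ^ 2 := fun l => one_div_div _ _
  have hval : ∀ l, 1 / (2 * (b ^ 2 / ω l)) = ω l / (2 * b ^ 2) := by
    intro l
    have h1 : ω l ≠ 0 := (hω l).ne'
    have h2 : b ≠ 0 := hbpos.ne'
    field_simp
  have hd : ∀ l l', l ≠ l' → dmin ≤ |a l - a l'| := fun l l' h => hdmin.2 ⟨l, l', h, rfl⟩
  have hfar : ∀ l l' : Fin L, l ≠ l' → ∀ x : ℝ, |x - a l| < ω l / b ^ 2 →
      ω l' / b ^ 2 ≤ |x - a l'| := by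
    intro l l' hne x hx
    have h1 := hd l l' hne
    have h2 := hrω l
    have h3 := hrω l'
    have h4 : |a l - a l'| ≤ |a l - x| + |x - a l'| := abs_sub_le _ _ _
    rw [abs_sub_comm (a l) x] at h4
    linarith
  have hdisj : ∀ l l' : Fin L, l ≠ l' →
      Disjoint {x : ℝ | |x - a l| < ω l / b ^ 2} {x : ℝ | |x - a l'| < ω l' / b ^ 2} := by
    intro l l' hne
    rw [Set.disjoint_left]
    intro x hx hx'
    exact absurd hx' (not_lt.mpr (hfar l l' hne x hx))
  have hMCout : ∀ (l : Fin L) (x : ℝ), ω l / b ^ 2 ≤ |x - a l| →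
      MC (b ^ 2 / ω l) (x - a l) = ω l / (2 * b ^ 2) := by
    intro l x hx
    rw [MC_of_one_div_le (hγpos l) (by rw [hinv l]; exact hx), hval l]
  have hnot : ∀ x : ℝ, x ∉ (⋃ l, {x : ℝ | |x - a l| < ω l / b ^ 2}) →
      ∀ l, ω l / b ^ 2 ≤ |x - a l| := by
    intro x hx l
    by_contra h
    exact hx (Set.mem_iUnion.mpr ⟨l, not_le.mp h⟩)
  have hconstval : ∀ x : ℝ, x ∉ (⋃ l, {x : ℝ | |x - a l| < ω l / b ^ 2}) →
      (∑ l, ω l * MC (b ^ 2 / ω l) (x - a l)) = ∑ l, ω l * (ω l / (2 * b ^ 2)) :=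
    fun x hx => Finset.sum_congr rfl fun l _ => by rw [hMCout l x (hnot x hx l)]
  have hgmin : ∀ l : Fin L, IsLocalMin (fun x : ℝ => MC (b ^ 2 / ω l) (x - a l)) (a l) := by
    intro l
    refine Filter.Eventually.of_forall fun y => ?_
    simp only
    rw [sub_self, MC_zero (hγpos l)]
    exact MC_nonneg (hγpos l) _
  have hguniq : ∀ (l : Fin L) (x : ℝ), |x - a l| < ω l / b ^ 2 →
      IsLocalMin (fun x : ℝ => MC (b ^ 2 / ω l) (x - a l)) x → x = a l := by
    intro l x hx hmin
    by_contra hne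
    have h0 : 0 < |x - a l| := abs_pos.mpr (sub_ne_zero.mpr hne)
    have hcont : Continuous fun t : ℝ => a l + t * (x - a l) := by continuity
    have htend : Tendsto (fun t : ℝ => a l + t * (x - a l)) (𝓝[<] (1:ℝ)) (𝓝 x) := by
      have h1 : Tendsto (fun t : ℝ => a l + t * (x - a l)) (𝓝 1)
          (𝓝 (a l + 1 * (x - a l))) := hcont.tendsto 1
      rw [show a l + 1 * (x - a l) = x by ring] at h1
      exact h1.mono_left nhdsWithin_le_nhds
    have hev := htend.eventually hmin
    have hIoo : ∀ᶠ t in 𝓝[<] (1:ℝ), t ∈ Set.Ioo (0:ℝ) 1 :=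
      Ioo_mem_nhdsLT_of_mem ⟨zero_lt_one, le_refl 1⟩
    obtain ⟨t, hle, ht0, ht1⟩ := (hev.and hIoo).exists
    simp only at hle
    have harg : a l + t * (x - a l) - a l = t * (x - a l) := by ring
    rw [harg] at hle
    have hlt : MC (b ^ 2 / ω l) (t * (x - a l)) < MC (b ^ 2 / ω l) (x - a l) := by
      rw [MC_abs _ (t * (x - a l)), MC_abs _ (x - a l), abs_mul, abs_of_pos ht0]
      refine MC_lt (hγpos l) (by positivity) ?_ ?_
      · nlinarith
      · rw [hinv l]; exact hx.le
    linarith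
  set ψ : ℝ → ℝ := fun x => ∑ l, ω l * MC (b ^ 2 / ω l) (x - a l) with hψ
  have hNopen : ∀ l : Fin L, IsOpen {x : ℝ | |x - a l| < ω l / b ^ 2} := by
    intro l
    have h : {x : ℝ | |x - a l| < ω l / b ^ 2} = Metric.ball (a l) (ω l / b ^ 2) := by
      ext z; simp [Metric.mem_ball, Real.dist_eq]
    rw [h]; exact Metric.isOpen_ball
  have hmemN : ∀ l : Fin L, a l ∈ {x : ℝ | |x - a l| < ω l / b ^ 2} := by
    intro l
    simp only [Set.mem_setOf_eq, sub_self, abs_zero]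
    exact hrpos l
  have hψeq : ∀ (l : Fin L) (x : ℝ), |x - a l| < ω l / b ^ 2 →
      ψ x = ω l * MC (b ^ 2 / ω l) (x - a l) +
        ∑ l' ∈ Finset.univ.erase l, ω l' * (ω l' / (2 * b ^ 2)) := by
    intro l x hx
    rw [hψ]
    simp only
    rw [← Finset.add_sum_erase _ _ (Finset.mem_univ l)]
    congr 1
    refine Finset.sum_congr rfl fun l' hl' => ?_
    rw [hMCout l' x (hfar l l' (Finset.ne_of_mem_erase hl').symm x hx)]
  have hψmin : ∀ l : Fin L, IsLocalMin ψ (a l) := by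
    intro l
    have hnb : {x : ℝ | |x - a l| < ω l / b ^ 2} ∈ 𝓝 (a l) := (hNopen l).mem_nhds (hmemN l)
    filter_upwards [hnb] with y hy
    rw [hψeq l y hy, hψeq l (a l) (hmemN l), sub_self, MC_zero (hγpos l), mul_zero]
    have h1 : 0 ≤ ω l * MC (b ^ 2 / ω l) (y - a l) :=
      mul_nonneg (hω l).le (MC_nonneg (hγpos l) _)
    linarith
  have hψuniq : ∀ (l : Fin L) (y : ℝ), |y - a l| < ω l / b ^ 2 → IsLocalMin ψ y → y = a l := by
    intro l y hy hmin
    apply hguniq l y hy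
    have hnb : {x : ℝ | |x - a l| < ω l / b ^ 2} ∈ 𝓝 y := (hNopen l).mem_nhds hy
    filter_upwards [hmin, hnb] with z hz hzN
    rw [hψeq l z hzN, hψeq l y hy] at hz
    have hωl := hω l
    exact (mul_le_mul_iff_right₀ hωl).mp (by linarith)
  refine ⟨hdisj, fun x y hx hy => by rw [hconstval x hx, hconstval y hy],
    fun l => ⟨hgmin l, fun x hx => hguniq l x hx⟩, ?_⟩
  ext x
  simp only [Set.mem_setOf_eq, Set.mem_range, IsIsolatedLocalMin]
  constructor
  · rintro ⟨hmin, U, hU, hUuniq⟩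
    by_cases hx : x ∈ ⋃ l, {x : ℝ | |x - a l| < ω l / b ^ 2}
    · obtain ⟨l, hl⟩ := Set.mem_iUnion.mp hx
      exact ⟨l, (hψuniq l x hl hmin).symm⟩
    · exfalso
      have hub : ∀ y, ψ y ≤ ψ x := by
        intro y
        have h1 : ψ x = ∑ l, ω l * (ω l / (2 * b ^ 2)) := hconstval x hx
        rw [h1]
        refine Finset.sum_le_sum fun l _ => mul_le_mul_of_nonneg_left ?_ (hω l).le
        rw [← hval l]
        exact MC_le_max (hγpos l) _
      have hconst : ∀ᶠ y in 𝓝 x, ψ y = ψ x := by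
        filter_upwards [hmin] with y h
        exact le_antisymm (hub y) h
      obtain ⟨ε, hε, hball⟩ := Metric.eventually_nhds_iff.mp hconst
      have hmem : (U ∩ Metric.ball x ε) ∩ {x}ᶜ ∈ 𝓝[≠] x :=
        Filter.inter_mem
          (mem_nhdsWithin_of_mem_nhds (Filter.inter_mem hU (Metric.ball_mem_nhds _ hε)))
          self_mem_nhdsWithin
      obtain ⟨y, ⟨hyU, hyb⟩, hyne⟩ := Filter.nonempty_of_mem hmem
      have hymin : IsLocalMin ψ y := by
        filter_upwards [Metric.isOpen_ball.mem_nhds hyb] with z hz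
        rw [hball (Metric.mem_ball.mp hz), hball (Metric.mem_ball.mp hyb)]
      exact hyne (hUuniq y hyU hymin)
  · rintro ⟨l, rfl⟩
    exact ⟨hψmin l, {x : ℝ | |x - a l| < ω l / b ^ 2}, (hNopen l).mem_nhds (hmemN l),
      fun y hy hmin => hψuniq l y hy hmin⟩
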